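/- Let G be an Abelian group acting on X, A ⊆ G finite nonempty, Y ⊆ X finite nonempty, with |A · Y| ≤ α|Y| for some α ≥ 0. Then there exists a nonempty subset Z ⊆ Y such that |AC · Z| ≤ α|C · Z| for every finite subset C of G. -/

import Mathlib

open Pointwise Finset

/-- Petridis–Tao type theorem for actions of Abelian groups: if `|A · Y| ≤ α|Y|`,
there is a nonempty `Z ⊆ Y` with `|AC · Z| ≤ α|C · Z|` for every finite `C ⊆ G`. -/
theorem stmt_14 {G X : Type*} [CommGroup G] [MulAction G X] [DecidableEq G] [DecidableEq X]
    (A : Finset G) (hA : A.Nonempty) (Y : Finset X) (hY : Y.Nonempty)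
    (α : ℝ) (hα : 0 ≤ α)
    (h : ((A • Y).card : ℝ) ≤ α * Y.card) :
    ∃ Z : Finset X, Z ⊆ Y ∧ Z.Nonempty ∧
      ∀ C : Finset G, (((A * C) • Z).card : ℝ) ≤ α * ((C • Z).card : ℝ) := by
  classical
  have hYP : Y ∈ Y.powerset.erase ∅ :=
    mem_erase_of_ne_of_mem hY.ne_empty (mem_powerset_self _)
  obtain ⟨Z, hZmem, hmin⟩ :=
    exists_min_image (Y.powerset.erase ∅) (fun S ↦ ((A • S).card : ℝ) / S.card) ⟨Y, hYP⟩
  rw [mem_erase, mem_powerset, ← nonempty_iff_ne_empty] at hZmem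
  obtain ⟨hZne, hZY⟩ := hZmem
  have hZpos : (0 : ℝ) < Z.card := by exact_mod_cast hZne.card_pos
  set β : ℝ := ((A • Z).card : ℝ) / Z.card with hβ
  have hβα : β ≤ α := by
    have h1 : β ≤ ((A • Y).card : ℝ) / Y.card := hmin Y hYP
    have hYpos : (0 : ℝ) < Y.card := by exact_mod_cast hY.card_pos
    exact h1.trans ((div_le_iff₀ hYpos).2 h)
  have hβZ : ((A • Z).card : ℝ) = β * Z.card := by
    rw [hβ, div_mul_cancel₀ _ hZpos.ne']
  -- minimality: for any W ⊆ Z, β * |W| ≤ |A • W|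
  have hminW : ∀ W : Finset X, W ⊆ Z → β * W.card ≤ ((A • W).card : ℝ) := by
    intro W hWZ
    rcases W.eq_empty_or_nonempty with rfl | hWne
    · simp
    have hWP : W ∈ Y.powerset.erase ∅ :=
      mem_erase_of_ne_of_mem hWne.ne_empty (mem_powerset.2 (hWZ.trans hZY))
    have hWpos : (0 : ℝ) < W.card := by exact_mod_cast hWne.card_pos
    calc β * W.card ≤ ((A • W).card : ℝ) / W.card * W.card :=
          mul_le_mul_of_nonneg_right (hmin W hWP) hWpos.le
      _ = ((A • W).card : ℝ) := div_mul_cancel₀ _ hWpos.ne'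
  refine ⟨Z, hZY, hZne, ?_⟩
  have assoc : ∀ (B C : Finset G) (S : Finset X), (B * C) • S = B • (C • S) :=
    fun _ _ _ ↦ image₂_assoc mul_smul
  have key : ∀ C : Finset G, (((A * C) • Z).card : ℝ) ≤ β * ((C • Z).card : ℝ) := by
    intro C
    induction C using Finset.induction_on with
    | empty => simp
    | @insert x C hx ih =>
      set W : Finset X := Z ∩ x⁻¹ • (C • Z) with hW
      have hWZ : W ⊆ Z := inter_subset_left
      have hxW : x • W = x • Z ∩ C • Z := by
        rw [hW, smul_finset_inter, smul_inv_smul]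
      -- decomposition of insert x C • Z
      have hins : insert x C • Z = x • Z ∪ C • Z := by
        rw [insert_eq, union_smul, singleton_smul]
      -- |insert x C • Z| = |Z| + |C • Z| - |W|  (as naturals, rearranged)
      have hcard1 : ((insert x C • Z).card : ℝ) + W.card = Z.card + (C • Z).card := by
        have := card_union_add_card_inter (x • Z) (C • Z)
        rw [← hxW, card_smul_finset, card_smul_finset] at this
        rw [hins]
        exact_mod_cast this
      -- decomposition of (A * insert x C) • Z
      have hAxW : x • (A • W) ⊆ (A * C) • Z := by
        rw [smul_comm, assoc]
        refine smul_subset_smul_left ?_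
        rw [hxW]; exact inter_subset_right
      have hAx : (A * insert x C) • Z ⊆ (A * C) • Z ∪ (x • (A • Z) \ x • (A • W)) := by
        rw [assoc, hins, smul_union, ← smul_comm, ← assoc, union_comm]
        intro y hy
        rcases mem_union.1 hy with hy | hy
        · exact mem_union_left _ hy
        · by_cases hy2 : y ∈ x • (A • W)
          · exact mem_union_left _ (hAxW hy2)
          · exact mem_union_right _ (mem_sdiff.2 ⟨hy, hy2⟩)
      have hsub : x • (A • W) ⊆ x • (A • Z) :=
        smul_finset_subset_smul_finset (smul_subset_smul_left hWZ)
      have hcard2 : (((A * insert x C) • Z).card : ℝ) ≤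
          ((A * C) • Z).card + ((A • Z).card - (A • W).card) := by
        have h1 : ((A * insert x C) • Z).card ≤
            ((A * C) • Z).card + (x • (A • Z) \ x • (A • W)).card :=
          (card_le_card hAx).trans (card_union_le _ _)
        have h2 : (x • (A • Z) \ x • (A • W)).card = (A • Z).card - (A • W).card := by
          rw [card_sdiff_of_subset hsub, card_smul_finset, card_smul_finset]
        have h3 : (A • W).card ≤ (A • Z).card :=
          card_le_card (smul_subset_smul_left hWZ)
        rw [h2] at h1
        have := (Nat.cast_le (α := ℝ)).2 h1
        push_cast [Nat.cast_sub h3] at this ⊢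
        linarith
      have hAW : β * W.card ≤ ((A • W).card : ℝ) := hminW W hWZ
      have hC : 0 ≤ β := div_nonneg (Nat.cast_nonneg _) (Nat.cast_nonneg _)
      calc (((A * insert x C) • Z).card : ℝ)
          ≤ ((A * C) • Z).card + (((A • Z).card : ℝ) - (A • W).card) := hcard2
        _ ≤ β * (C • Z).card + (β * Z.card - β * W.card) := by
            rw [hβZ]; linarith [ih, hAW]
        _ = β * ((C • Z).card + Z.card - W.card) := by ring
        _ = β * ((insert x C • Z).card : ℝ) := by
            congr 1; linarith [hcard1]
  intro C
  exact (key C).trans (mul_le_mul_of_nonneg_right hβα (Nat.cast_nonneg _))
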